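/- arXiv:1205.1015 — 3 statements merged into one kernel-verified Lean document; each statement's English description precedes it below -/
import Mathlib

section
/- For every integer k ≥ 2 and every natural number p, there exist a non-constant real polynomial f, positive integers α_1, …, α_k, and real constants a_1, …, a_k such that, setting g = Σ_{i=1}^k a_i · f^{α_i} and Υ = {x ∈ ℝ : there exists i ≤ k with W(f^{α_1}, …, f^{α_i})(x) = 0}, the set Υ is finite with |Υ| ≥ p, and the number of distinct real zeros of g satisfies Z_ℝ(g) ≥ (1 + |Υ|)·(k − 1) + Z_ℝ(f). -/
open Polynomial Real

-- faà di bruno coefficient family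
noncomputable def FB (f : ℝ[X]) : ℕ → ℕ → ℝ[X]
  | 0, 0 => 1
  | 0, _+1 => 0
  | r+1, 0 => derivative (FB f r 0)
  | r+1, m+1 => derivative (FB f r (m+1)) + FB f r m * derivative f

lemma FB_zero_of_lt (f : ℝ[X]) : ∀ r m, r < m → FB f r m = 0 := by
  intro r
  induction r with
  | zero => intro m hm; match m, hm with | m+1, _ => rfl
  | succ r ih =>
    intro m hm
    match m, hm with
    | m+1, hm =>
      show derivative (FB f r (m+1)) + FB f r m * derivative f = 0
      rw [ih (m+1) (by omega), ih m (by omega)]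
      simp

lemma FB_diag (f : ℝ[X]) : ∀ r, FB f r r = (derivative f) ^ r := by
  intro r
  induction r with
  | zero => rfl
  | succ r ih =>
    show derivative (FB f r (r+1)) + FB f r r * derivative f = _
    rw [FB_zero_of_lt f r (r+1) (by omega), ih]
    simp [pow_succ]

lemma FB_key (f : ℝ[X]) : ∀ (r : ℕ) (g : ℝ[X]),
    derivative^[r] (g.comp f) =
      ∑ m ∈ Finset.range (r+1), FB f r m * (derivative^[m] g).comp f := by
  intro r
  induction r with
  | zero => intro g; simp [FB]
  | succ r ih =>
    intro g
    rw [Function.iterate_succ_apply', ih g]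
    rw [map_sum]
    have hterm : ∀ m, derivative (FB f r m * (derivative^[m] g).comp f)
        = derivative (FB f r m) * (derivative^[m] g).comp f
          + (FB f r m * derivative f) * (derivative^[m+1] g).comp f := by
      intro m
      rw [derivative_mul, derivative_comp]
      rw [show derivative ((⇑derivative)^[m] g) = (⇑derivative)^[m+1] g from (Function.iterate_succ_apply' _ _ _).symm]
      ring
    rw [Finset.sum_congr rfl (fun m _ => hterm m), Finset.sum_add_distrib]
    -- now rearrange
    have h1 : ∑ m ∈ Finset.range (r+1), derivative (FB f r m) * (derivative^[m] g).comp f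
        = ∑ m ∈ Finset.range (r+2), derivative (FB f r m) * (derivative^[m] g).comp f := by
      rw [Finset.sum_range_succ (n := r+1)]
      rw [FB_zero_of_lt f r (r+1) (by omega)]
      simp
    have h2 : ∑ m ∈ Finset.range (r+1), (FB f r m * derivative f) * (derivative^[m+1] g).comp f
        = ∑ m ∈ Finset.range (r+2), (if h : m = 0 then 0 else FB f r (m-1) * derivative f) * (derivative^[m] g).comp f := by
      rw [Finset.sum_range_succ' (n := r+1)]
      simp
    rw [h1, h2, ← Finset.sum_add_distrib]
    apply Finset.sum_congr rfl
    intro m _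
    rcases m with _ | m
    · show _ = FB f (r+1) 0 * _
      simp [FB]
    · show _ = FB f (r+1) (m+1) * _
      show derivative (FB f r (m+1)) * _ + _ = (derivative (FB f r (m+1)) + FB f r m * derivative f) * _
      simp
      ring

noncomputable def Wmat (f : ℝ[X]) (s : ℕ) : Matrix (Fin s) (Fin s) ℝ[X] :=
  Matrix.of fun r c => derivative^[(r:ℕ)] (f ^ ((c:ℕ)+1))

noncomputable def Nmat (f : ℝ[X]) (s : ℕ) : Matrix (Fin s) (Fin s) ℝ[X] :=
  Matrix.of fun m c => C ((((c:ℕ)+1).descFactorial (m:ℕ) : ℝ)) * f ^ ((c:ℕ)+1-(m:ℕ))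

noncomputable def dmat (s : ℕ) : Matrix (Fin s) (Fin s) ℝ :=
  Matrix.of fun m c => ((((c:ℕ)+1).descFactorial (m:ℕ) : ℝ))

lemma Wmat_eq_mul (f : ℝ[X]) (s : ℕ) :
    Wmat f s = (Matrix.of fun r m : Fin s => FB f (r:ℕ) (m:ℕ)) * Nmat f s := by
  refine Matrix.ext fun r c => ?_
  rw [Matrix.mul_apply]
  have h1 : f ^ ((c:ℕ)+1) = (X ^ ((c:ℕ)+1)).comp f := by simp
  show derivative^[(r:ℕ)] (f ^ ((c:ℕ)+1)) = _
  rw [h1, FB_key]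
  have h2 : ∑ m ∈ Finset.range ((r:ℕ)+1), FB f (r:ℕ) m * (derivative^[m] (X ^ ((c:ℕ)+1))).comp f
      = ∑ m ∈ Finset.range s, FB f (r:ℕ) m * (derivative^[m] (X ^ ((c:ℕ)+1))).comp f := by
    apply Finset.sum_subset
    · intro m hm; simp only [Finset.mem_range] at *; omega
    · intro m _ hm
      simp only [Finset.mem_range, not_lt] at hm
      rw [FB_zero_of_lt f (r:ℕ) m (by omega)]
      simp
  rw [h2, ← Fin.sum_univ_eq_sum_range (fun m => FB f (r:ℕ) m * (derivative^[m] (X ^ ((c:ℕ)+1))).comp f) s]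
  apply Finset.sum_congr rfl
  intro m _
  congr 1
  show (derivative^[(m:ℕ)] (X ^ ((c:ℕ)+1))).comp f = Nmat f s m c
  rw [iterate_derivative_X_pow_eq_C_mul]
  show (C ((((c:ℕ)+1).descFactorial (m:ℕ) : ℝ)) * X ^ ((c:ℕ)+1-(m:ℕ))).comp f = _
  rw [mul_comp, C_comp, X_pow_comp]
  rfl

lemma det_B (f : ℝ[X]) (s : ℕ) :
    (Matrix.of fun r m : Fin s => FB f (r:ℕ) (m:ℕ)).det = ∏ r : Fin s, (derivative f) ^ (r:ℕ) := by
  rw [Matrix.det_of_lowerTriangular]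
  · apply Finset.prod_congr rfl
    intro r _
    exact FB_diag f (r:ℕ)
  · intro i j hij
    exact FB_zero_of_lt f _ _ (by exact_mod_cast hij)

lemma prod_N (f : ℝ[X]) (s : ℕ) (σ : Equiv.Perm (Fin s)) :
    ∏ c : Fin s, Nmat f s (σ c) c = C (∏ c : Fin s, dmat s (σ c) c) * f ^ s := by
  by_cases h : ∀ c : Fin s, ((σ c : ℕ)) ≤ (c:ℕ) + 1
  · have hexp : ∑ c : Fin s, ((c:ℕ) + 1 - ((σ c : ℕ))) = s := by
      have h1 : ∑ c : Fin s, (((c:ℕ) + 1 - ((σ c : ℕ))) + ((σ c : ℕ)))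
          = ∑ c : Fin s, ((c:ℕ) + 1) := by
        apply Finset.sum_congr rfl
        intro c _
        have := h c
        omega
      rw [Finset.sum_add_distrib] at h1
      have h2 : ∑ c : Fin s, ((σ c : ℕ)) = ∑ c : Fin s, (c:ℕ) :=
        Equiv.sum_comp σ (fun c => (c:ℕ))
      rw [h2] at h1
      simp only [Finset.sum_add_distrib] at h1
      simp only [Finset.sum_const, Finset.card_univ, Fintype.card_fin, smul_eq_mul, mul_one] at h1
      omega
    have : ∀ c : Fin s, Nmat f s (σ c) c = C (dmat s (σ c) c) * f ^ ((c:ℕ) + 1 - ((σ c : ℕ))) :=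
      fun c => rfl
    rw [Finset.prod_congr rfl (fun c _ => this c), Finset.prod_mul_distrib, ← map_prod,
      Finset.prod_pow_eq_pow_sum, hexp]
  · push_neg at h
    obtain ⟨c0, hc0⟩ := h
    have hd : dmat s (σ c0) c0 = 0 := by
      show ((((c0:ℕ)+1).descFactorial ((σ c0 : ℕ)) : ℝ)) = 0
      rw [Nat.descFactorial_eq_zero_iff_lt.mpr (by omega)]
      simp
    have e1 : ∏ c : Fin s, Nmat f s (σ c) c = 0 :=
      Finset.prod_eq_zero (Finset.mem_univ c0) (show Nmat f s (σ c0) c0 = 0 by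
        show C ((((c0:ℕ)+1).descFactorial ((σ c0:ℕ)) : ℝ)) * _ = 0
        rw [Nat.descFactorial_eq_zero_iff_lt.mpr (by omega)]; simp)
    have e2 : ∏ c : Fin s, dmat s (σ c) c = 0 :=
      Finset.prod_eq_zero (Finset.mem_univ c0) hd
    rw [e1, e2]
    simp

lemma det_N (f : ℝ[X]) (s : ℕ) : (Nmat f s).det = C ((dmat s).det) * f ^ s := by
  rw [Matrix.det_apply, Matrix.det_apply, map_sum, Finset.sum_mul]
  apply Finset.sum_congr rfl
  intro σ _
  rw [prod_N f s σ]
  rcases Int.units_eq_one_or (Equiv.Perm.sign σ) with h | h <;> rw [h] <;>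
    simp [neg_mul]

lemma dmat_det_ne_zero (s : ℕ) : (dmat s).det ≠ 0 := by
  have h1 : dmat s = (Matrix.of fun (i j : Fin s) =>
      (descPochhammer ℝ (j:ℕ)).eval (((i:ℕ) : ℝ) + 1)).transpose := by
    refine Matrix.ext fun m c => ?_
    show ((((c:ℕ)+1).descFactorial (m:ℕ) : ℝ)) = (descPochhammer ℝ (m:ℕ)).eval (((c:ℕ):ℝ) + 1)
    rw [show (((c:ℕ):ℝ) + 1) = (((c:ℕ) + 1 : ℕ) : ℝ) by push_cast; ring,
      descPochhammer_eval_eq_descFactorial]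
  rw [h1, Matrix.det_transpose]
  rw [← Matrix.det_eval_matrixOfPolynomials_eq_det_vandermonde
      (fun i : Fin s => ((i:ℕ):ℝ) + 1) (fun j : Fin s => descPochhammer ℝ (j:ℕ))
      (fun j => descPochhammer_natDegree ℝ (j:ℕ)) (fun j => monic_descPochhammer ℝ (j:ℕ))]
  rw [Matrix.det_vandermonde_ne_zero_iff]
  intro i j hij
  have := Fin.val_eq_val i j
  simp only [Function.Injective] at *
  have : ((i:ℕ):ℝ) = ((j:ℕ):ℝ) := by linarith [hij]
  exact Fin.ext (by exact_mod_cast this)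


lemma natDegree_T_le : ∀ N : ℕ, (Polynomial.Chebyshev.T ℝ (N:ℤ)).natDegree ≤ N
  | 0 => by simp [Polynomial.Chebyshev.T_zero]
  | 1 => by simp [Polynomial.Chebyshev.T_one]
  | (N+2) => by
    have h1 := natDegree_T_le N
    have h2 := natDegree_T_le (N+1)
    rw [show ((N+2:ℕ):ℤ) = (N:ℤ)+2 by push_cast; ring, Polynomial.Chebyshev.T_add_two]
    refine le_trans (natDegree_sub_le _ _) ?_
    rw [max_le_iff]
    constructor
    · refine le_trans natDegree_mul_le ?_
      have : (2 * X : ℝ[X]).natDegree ≤ 1 :=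
        le_trans natDegree_mul_le (by simp)
      have h2' : (Polynomial.Chebyshev.T ℝ ((N:ℤ)+1)).natDegree ≤ N + 1 := by
        rw [show ((N:ℤ)+1) = ((N+1:ℕ):ℤ) by push_cast; ring]; exact h2
      omega
    · omega

section cheb
variable (n : ℕ) (hn : 0 < n)

noncomputable def Tn (n : ℕ) : ℝ[X] := Polynomial.Chebyshev.T ℝ (n:ℤ)
noncomputable def fpoly (n : ℕ) : ℝ[X] := 2 * (Tn n)^2 + 1

lemma eval_Tn_cos (φ : ℝ) : (Tn n).eval (Real.cos φ) = Real.cos (n * φ) := by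
  have := Polynomial.Chebyshev.T_real_cos φ (n:ℤ)
  exact_mod_cast this

lemma eval_f (x : ℝ) : (fpoly n).eval x = 2 * ((Tn n).eval x)^2 + 1 := by
  simp [fpoly]

lemma eval_f_cos (φ : ℝ) : (fpoly n).eval (Real.cos φ) = Real.cos (2*n*φ) + 2 := by
  rw [eval_f, eval_Tn_cos, show (2*(n:ℝ)*φ) = 2*((n:ℝ)*φ) by ring, Real.cos_two_mul]
  ring

lemma f_pos (x : ℝ) : 0 < (fpoly n).eval x := by
  rw [eval_f]; nlinarith [sq_nonneg ((Tn n).eval x)]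

lemma natDegree_f_le : (fpoly n).natDegree ≤ 2*n := by
  refine le_trans (natDegree_add_le _ _) ?_
  simp only [natDegree_one, max_le_iff]
  constructor
  · refine le_trans natDegree_mul_le ?_
    have h1 : ((Tn n)^2).natDegree ≤ 2 * (Tn n).natDegree := natDegree_pow_le
    have h2 := natDegree_T_le n
    have : ((2:ℝ[X])).natDegree = 0 := by
      simp [Polynomial.natDegree_ofNat]
    rw [this]
    simp only [zero_add]
    calc ((Tn n)^2).natDegree ≤ 2 * (Tn n).natDegree := natDegree_pow_le
      _ ≤ 2 * n := by have := natDegree_T_le n; unfold Tn; omega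
  · omega

lemma natDegree_f_pos (hn : 0 < n) : 0 < (fpoly n).natDegree := by
  by_contra h
  push_neg at h
  interval_cases h' : (fpoly n).natDegree
  · have hC := Polynomial.eq_C_of_natDegree_eq_zero h'
    have e1 : (fpoly n).eval (Real.cos 0) = 3 := by
      rw [eval_f_cos]; norm_num
    have e2 : (fpoly n).eval (Real.cos (π / (2*n))) = 1 := by
      rw [eval_f_cos]
      rw [show 2*(n:ℝ)*(π/(2*n)) = π by field_simp]
      norm_num
    rw [hC] at e1 e2
    simp at e1 e2
    linarith
end cheb


lemma iteratedDeriv_polyeval (q : ℝ[X]) : ∀ r : ℕ,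
    iteratedDeriv r (fun y : ℝ => q.eval y) = fun y => (derivative^[r] q).eval y := by
  intro r
  induction r with
  | zero => simp
  | succ r ih =>
    rw [iteratedDeriv_succ, ih]
    funext y
    rw [Function.iterate_succ_apply']
    exact Polynomial.deriv _

lemma cos_family_injOn (d : ℕ) (hd : 0 < d) (θ : ℝ) (hθ1 : 0 < θ) (hθ2 : θ < π)
    {m1 m2 : ℕ} (h1 : m1 < d) (h2 : m2 < d)
    (he : Real.cos ((θ + 2*π*m1)/d) = Real.cos ((θ + 2*π*m2)/d)) : m1 = m2 := by
  have hπ := Real.pi_pos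
  have hd' : (d:ℝ) ≠ 0 := by positivity
  have h2π : (2*π) ≠ 0 := by positivity
  rw [Real.cos_eq_cos_iff] at he
  obtain ⟨K, hK | hK⟩ := he
  · have e0 := congrArg (fun t => t * (d:ℝ)) hK
    simp only [div_mul_cancel₀ _ hd', add_mul] at e0
    -- e0 : θ + 2πm2 = 2Kπ*d + (θ + 2πm1)
    have e1 : (2*π) * (m2:ℝ) = (2*π) * ((K:ℝ)*d + m1) := by ring_nf; ring_nf at e0; linarith
    have e2 : (m2:ℝ) = (K:ℝ)*d + m1 := mul_left_cancel₀ h2π e1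
    have e3 : (m2:ℤ) = K*d + m1 := by exact_mod_cast e2
    have hdz : (0:ℤ) ≤ (d:ℤ) := by exact_mod_cast Nat.zero_le d
    rcases lt_trichotomy K 0 with hK0 | hK0 | hK0
    · have hK1 : K ≤ -1 := by omega
      have hle : K*(d:ℤ) ≤ (-1)*(d:ℤ) := mul_le_mul_of_nonneg_right hK1 hdz
      omega
    · rw [hK0] at e3; simp at e3; omega
    · have hK1 : 1 ≤ K := by omega
      have hle : 1*(d:ℤ) ≤ K*(d:ℤ) := mul_le_mul_of_nonneg_right hK1 hdz
      omega
  · have e0 := congrArg (fun t => t * (d:ℝ)) hK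
    simp only [div_mul_cancel₀ _ hd', sub_mul] at e0
    -- e0 : θ + 2πm2 = 2Kπ*d − (θ + 2πm1)
    set z : ℤ := K*d - m1 - m2 with hz
    have e1 : θ = π * (z:ℝ) := by
      have : (z:ℝ) = (K:ℝ)*d - m1 - m2 := by push_cast [hz]; ring
      rw [this]; ring_nf; ring_nf at e0; linarith
    have hz0 : (0:ℝ) < (z:ℝ) := by
      rcases le_or_gt ((z:ℝ)) 0 with h | h
      · nlinarith
      · exact h
    have hz1 : ((z:ℝ)) < 1 := by nlinarith
    have : (0:ℤ) < z := by exact_mod_cast hz0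
    have : (z:ℤ) < 1 := by exact_mod_cast hz1
    omega

lemma card_cos_family (d : ℕ) (hd : 0 < d) (θ : ℝ) (hθ1 : 0 < θ) (hθ2 : θ < π) :
    ((Finset.range d).image (fun m : ℕ => Real.cos ((θ + 2*π*(m:ℝ))/d))).card = d := by
  rw [Finset.card_image_of_injOn, Finset.card_range]
  intro m1 hm1 m2 hm2 he
  simp only [Finset.coe_range, Set.mem_Iio] at hm1 hm2
  exact cos_family_injOn d hd θ hθ1 hθ2 hm1 hm2 he


noncomputable def Wmatdef := Wmat

lemma Wdet_eval (f : ℝ[X]) (s : ℕ) (x : ℝ) : ((Wmat f s).det).eval x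
    = (∏ r : Fin s, ((derivative f).eval x) ^ (r:ℕ)) * ((dmat s).det * (f.eval x)^s) := by
  rw [Wmat_eq_mul, Matrix.det_mul, det_B, det_N]
  simp [eval_prod]

/-- The Wronskian (over all of `ℝ`) of the first `j` functions of the family `f`. -/
noncomputable def wronskianR (f : ℕ → ℝ → ℝ) (j : ℕ) (x : ℝ) : ℝ :=
  (Matrix.of fun r c : Fin j => iteratedDeriv (r : ℕ) (f (c : ℕ)) x).det

lemma wronskianR_eq (f : ℝ[X]) (s : ℕ) (x : ℝ) :
    wronskianR (fun i y => f.eval y ^ (i+1)) s x = ((Wmat f s).det).eval x := by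
  unfold wronskianR
  have h : (Matrix.of fun r c : Fin s =>
        iteratedDeriv (r:ℕ) ((fun i y => f.eval y ^ (i+1)) (c:ℕ)) x)
      = (Wmat f s).map (evalRingHom x) := by
    refine Matrix.ext fun r c => ?_
    show iteratedDeriv (r:ℕ) (fun y => f.eval y ^ ((c:ℕ)+1)) x
      = eval x (derivative^[(r:ℕ)] (f^((c:ℕ)+1)))
    have hfun : (fun y : ℝ => f.eval y ^ ((c:ℕ)+1)) = fun y => (f^((c:ℕ)+1)).eval y := by
      funext y; simp
    rw [hfun, iteratedDeriv_polyeval]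
  rw [h]
  exact ((RingHom.map_det (evalRingHom x) (Wmat f s)).symm).trans (by simp)

lemma UpsEq (n k : ℕ) (hn : 0 < n) (hk : 2 ≤ k) :
    {x : ℝ | ∃ s, 1 ≤ s ∧ s ≤ k ∧
      wronskianR (fun i y => (fpoly n).eval y ^ (i+1)) s x = 0}
      = {x : ℝ | (derivative (fpoly n)).eval x = 0} := by
  ext x
  simp only [Set.mem_setOf_eq]
  constructor
  · rintro ⟨s, hs1, hsk, hW⟩
    rw [wronskianR_eq, Wdet_eval] at hW
    rcases mul_eq_zero.mp hW with h | h
    · rcases Finset.prod_eq_zero_iff.mp h with ⟨r, -, hr⟩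
      exact (pow_eq_zero_iff'.mp hr).1
    · exfalso
      rcases mul_eq_zero.mp h with h' | h'
      · exact dmat_det_ne_zero s h'
      · exact (pow_ne_zero _ (ne_of_gt (f_pos n x))) h'
  · intro h
    refine ⟨2, by omega, hk, ?_⟩
    rw [wronskianR_eq, Wdet_eval]
    have h2 : ∏ r : Fin 2, ((derivative (fpoly n)).eval x) ^ (r:ℕ) = 0 := by
      rw [Fin.prod_univ_two]; simp [h]
    rw [h2, zero_mul]

lemma zset_eq (q : ℝ[X]) (hq : q ≠ 0) : {x : ℝ | q.eval x = 0} = ↑(q.roots.toFinset) := by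
  ext y
  simp [Polynomial.mem_roots, hq, IsRoot]

lemma deriv_f_eval (n : ℕ) (x : ℝ) (h : (Tn n).eval x = 0) :
    (derivative (fpoly n)).eval x = 0 := by
  have hd : derivative (fpoly n) = 4 * Tn n * derivative (Tn n) := by
    unfold fpoly
    rw [derivative_add, derivative_one, add_zero, derivative_mul]
    rw [derivative_pow]
    norm_num
    rw [show (C (2:ℝ)) = (2:ℝ[X]) by rw [show ((2:ℝ)) = ((2:ℕ):ℝ) by norm_num, C_eq_natCast]; norm_num]
    ring
  rw [hd]
  simp [h]

lemma theta_pos (j : ℕ) : 0 < π/(2*((j:ℝ)+2)) := by positivity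

lemma theta_lt (j : ℕ) : π/(2*((j:ℝ)+2)) < π := by
  have hπ := Real.pi_pos
  have hj : (0:ℝ) ≤ (j:ℝ) := Nat.cast_nonneg j
  rw [div_lt_iff₀ (by positivity)]
  nlinarith

noncomputable def FjT (n : ℕ) (j : ℕ) : Finset ℝ := (Finset.range (2*n)).image
  (fun m : ℕ => Real.cos ((π/(2*((j:ℝ)+2)) + 2*π*(m:ℝ))/((2*n : ℕ):ℝ)))

lemma FjT_card (n j : ℕ) (hn : 0 < n) : (FjT n j).card = 2*n :=
  card_cos_family (2*n) (by omega) _ (theta_pos j) (theta_lt j)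

lemma FjT_val (n : ℕ) (hn : 0 < n) (j : ℕ) {x : ℝ} (hx : x ∈ FjT n j) :
    (fpoly n).eval x = Real.cos (π/(2*((j:ℝ)+2))) + 2 := by
  rw [FjT, Finset.mem_image] at hx
  obtain ⟨m, hm, rfl⟩ := hx
  rw [eval_f_cos]
  rw [show 2*(n:ℝ) * ((π/(2*((j:ℝ)+2)) + 2*π*(m:ℝ))/((2*n : ℕ):ℝ))
      = π/(2*((j:ℝ)+2)) + (m:ℤ)*(2*π) by
    have hn' : ((2*n : ℕ):ℝ) ≠ 0 := by positivity
    push_cast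
    push_cast at hn'
    field_simp]
  rw [Real.cos_add_int_mul_two_pi]


set_option maxHeartbeats 1000000 in
/-- Optimality of the Wronskian bound: for every `k ≥ 2` and every `p`, there are a
non-constant polynomial `f`, positive integer exponents `α_1, …, α_k` and real constants
`a_1, …, a_k` such that, for `g = Σ_i a_i f^{α_i}` and
`Υ = {x : some Wronskian W(f^{α_1}, …, f^{α_i}) vanishes at x}`, the set `Υ` is finite
with `|Υ| ≥ p` and `Z_ℝ(g) ≥ (1 + |Υ|)(k - 1) + Z_ℝ(f)`. -/
theorem stmt17 (k p : ℕ) (hk : 2 ≤ k) :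
    ∃ (f : Polynomial ℝ) (α : ℕ → ℕ) (a : ℕ → ℝ),
      0 < f.natDegree ∧ (∀ i < k, 0 < α i) ∧
      {x : ℝ | ∃ s, 1 ≤ s ∧ s ≤ k ∧
          wronskianR (fun i y => f.eval y ^ α i) s x = 0}.Finite ∧
      p ≤ {x : ℝ | ∃ s, 1 ≤ s ∧ s ≤ k ∧
          wronskianR (fun i y => f.eval y ^ α i) s x = 0}.ncard ∧
      (1 + {x : ℝ | ∃ s, 1 ≤ s ∧ s ≤ k ∧
            wronskianR (fun i y => f.eval y ^ α i) s x = 0}.ncard) * (k - 1)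
          + {x : ℝ | f.eval x = 0}.ncard ≤
        {x : ℝ | (∑ i ∈ Finset.range k, a i * f.eval x ^ α i) = 0}.ncard := by
  have hn : 0 < p + 1 := Nat.succ_pos p
  set n : ℕ := p + 1 with hn_def
  set Q : ℝ[X] := X * ∏ j ∈ Finset.range (k-1),
      (X - C (Real.cos (π/(2*((j:ℝ)+2))) + 2)) with hQ_def
  have hdegf : 0 < (fpoly n).natDegree := natDegree_f_pos n hn
  have hf'ne : derivative (fpoly n) ≠ 0 := by
    intro h
    have := natDegree_eq_zero_of_derivative_eq_zero h
    omega
  have hU1 : {x : ℝ | (derivative (fpoly n)).eval x = 0}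
      = ↑((derivative (fpoly n)).roots.toFinset) := zset_eq _ hf'ne
  have hcardU_ub : ((derivative (fpoly n)).roots.toFinset).card ≤ 2*n - 1 := by
    have h1 : ((derivative (fpoly n)).roots.toFinset).card
        ≤ Multiset.card (derivative (fpoly n)).roots := Multiset.toFinset_card_le _
    have h2 := Polynomial.card_roots' (derivative (fpoly n))
    have h3 : (derivative (fpoly n)).natDegree < (fpoly n).natDegree :=
      natDegree_derivative_lt (by omega)
    have h4 := natDegree_f_le n
    omega
  have hcardU_lb : n ≤ ((derivative (fpoly n)).roots.toFinset).card := by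
    have hsub : (Finset.range n).image (fun m : ℕ => Real.cos ((π/2 + 2*π*(m:ℝ))/n))
        ⊆ (derivative (fpoly n)).roots.toFinset := by
      intro x hx
      rw [Finset.mem_image] at hx
      obtain ⟨m, hm, rfl⟩ := hx
      rw [Multiset.mem_toFinset, Polynomial.mem_roots hf'ne]
      show (derivative (fpoly n)).eval _ = 0
      apply deriv_f_eval
      rw [eval_Tn_cos]
      rw [show (n:ℝ) * ((π/2 + 2*π*(m:ℝ))/n) = π/2 + (m:ℤ)*(2*π) by
        push_cast
        field_simp]
      rw [Real.cos_add_int_mul_two_pi]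
      exact Real.cos_pi_div_two
    calc n = ((Finset.range n).image (fun m : ℕ => Real.cos ((π/2 + 2*π*(m:ℝ))/n))).card :=
          (card_cos_family n hn (π/2) (by positivity) (by linarith [Real.pi_pos])).symm
      _ ≤ _ := Finset.card_le_card hsub
  have hQmonic : Q.Monic :=
    (monic_X).mul (monic_prod_of_monic _ _ (fun j _ => monic_X_sub_C _))
  have hQne : Q ≠ 0 := hQmonic.ne_zero
  have hQdeg : Q.natDegree ≤ k := by
    rw [hQ_def]
    refine le_trans natDegree_mul_le ?_
    have h1 : (∏ j ∈ Finset.range (k-1),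
        ((X:ℝ[X]) - C (Real.cos (π/(2*((j:ℝ)+2))) + 2))).natDegree ≤ k - 1 := by
      refine le_trans (natDegree_prod_le _ _) ?_
      refine le_trans (Finset.sum_le_card_nsmul _ _ 1 (fun j _ => by
        rw [natDegree_X_sub_C])) ?_
      simp
    have h2 : (X : ℝ[X]).natDegree = 1 := natDegree_X
    omega
  have hcompne : Q.comp (fpoly n) ≠ 0 := by
    intro h
    rcases Polynomial.comp_eq_zero_iff.mp h with h' | ⟨-, h'⟩
    · exact hQne h'
    · have : (fpoly n).natDegree = 0 := by rw [h']; exact natDegree_C _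
      omega
  have hQcoeff0 : Q.coeff 0 = 0 := by
    rw [hQ_def, Polynomial.mul_coeff_zero, coeff_X_zero, zero_mul]
  have hsum : ∀ x : ℝ, (∑ i ∈ Finset.range k, Q.coeff (i+1) * (fpoly n).eval x ^ (i+1))
      = (Q.comp (fpoly n)).eval x := by
    intro x
    have he := eval_eq_sum_range' (p := Q) (show Q.natDegree < k+1 by omega)
      ((fpoly n).eval x)
    rw [eval_comp, he, Finset.sum_range_succ', hQcoeff0]
    simp
  have hQroot : ∀ j ∈ Finset.range (k-1),
      Q.eval (Real.cos (π/(2*((j:ℝ)+2))) + 2) = 0 := by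
    intro j hj
    rw [hQ_def, eval_mul, eval_prod, Finset.prod_eq_zero hj (by simp), mul_zero]
  have hFjcard : ∀ j : ℕ, (FjT n j).card = 2*n := fun j => FjT_card n j hn
  have hFjval : ∀ j : ℕ, ∀ x ∈ FjT n j,
      (fpoly n).eval x = Real.cos (π/(2*((j:ℝ)+2))) + 2 :=
    fun j x hx => FjT_val n hn j hx
  have hθpos : ∀ j : ℕ, 0 < π/(2*((j:ℝ)+2)) := theta_pos
  have hθlt : ∀ j : ℕ, π/(2*((j:ℝ)+2)) < π := theta_lt
  have hFjsub : ∀ j ∈ Finset.range (k-1), FjT n j ⊆ (Q.comp (fpoly n)).roots.toFinset := by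
    intro j hj x hx
    rw [Multiset.mem_toFinset, Polynomial.mem_roots hcompne]
    show (Q.comp (fpoly n)).eval x = 0
    rw [eval_comp, hFjval j x hx]
    exact hQroot j hj
  have hθinj : ∀ j1 j2 : ℕ, π/(2*((j1:ℝ)+2)) = π/(2*((j2:ℝ)+2)) → j1 = j2 := by
    intro j1 j2 h
    have hπ : π ≠ 0 := ne_of_gt Real.pi_pos
    have hd1 : (2*((j1:ℝ)+2)) ≠ 0 := by positivity
    have hd2 : (2*((j2:ℝ)+2)) ≠ 0 := by positivity
    rw [div_eq_div_iff (by positivity) (by positivity)] at h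
    have h1 := mul_left_cancel₀ hπ h
    have : (j1:ℝ) = j2 := by linarith
    exact_mod_cast this
  have hdisj : ∀ j1 ∈ Finset.range (k-1), ∀ j2 ∈ Finset.range (k-1),
      j1 ≠ j2 → Disjoint (FjT n j1) (FjT n j2) := by
    intro j1 _ j2 _ hne
    rw [Finset.disjoint_left]
    intro x hx1 hx2
    have e1 := hFjval j1 x hx1
    have e2 := hFjval j2 x hx2
    have ec : Real.cos (π/(2*((j1:ℝ)+2))) = Real.cos (π/(2*((j2:ℝ)+2))) := by
      linarith
    have := Real.injOn_cos ⟨le_of_lt (hθpos j1), le_of_lt (hθlt j1)⟩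
      ⟨le_of_lt (hθpos j2), le_of_lt (hθlt j2)⟩ ec
    exact hne (hθinj _ _ this)
  have hFcard : ((Finset.range (k-1)).biUnion (FjT n)).card = (k-1)*(2*n) := by
    rw [Finset.card_biUnion hdisj, Finset.sum_congr rfl (fun j _ => hFjcard j)]
    simp [mul_comm]
  have hFsub : (Finset.range (k-1)).biUnion (FjT n) ⊆ (Q.comp (fpoly n)).roots.toFinset := by
    intro x hx
    rw [Finset.mem_biUnion] at hx
    obtain ⟨j, hj, hxj⟩ := hx
    exact hFjsub j hj hxj
  have hg_ncard : (k-1)*(2*n) ≤ ((Q.comp (fpoly n)).roots.toFinset).card :=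
    hFcard ▸ Finset.card_le_card hFsub
  refine ⟨fpoly n, fun i => i+1, fun i => Q.coeff (i+1), hdegf,
    fun i _ => Nat.succ_pos i, ?_, ?_, ?_⟩
  · rw [UpsEq n k hn hk, hU1]
    exact Finset.finite_toSet _
  · rw [UpsEq n k hn hk, hU1, Set.ncard_coe_finset]
    omega
  · rw [UpsEq n k hn hk, hU1, Set.ncard_coe_finset]
    have hZf : {x : ℝ | (fpoly n).eval x = 0} = (∅ : Set ℝ) := by
      ext x
      simp only [Set.mem_setOf_eq, Set.mem_empty_iff_false, iff_false]
      exact ne_of_gt (f_pos n x)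
    rw [hZf, Set.ncard_empty, add_zero]
    have hZg : {x : ℝ | (∑ i ∈ Finset.range k, Q.coeff (i+1) * (fpoly n).eval x ^ (i+1)) = 0}
        = ↑((Q.comp (fpoly n)).roots.toFinset) := by
      rw [show {x : ℝ | (∑ i ∈ Finset.range k, Q.coeff (i+1) * (fpoly n).eval x ^ (i+1)) = 0}
          = {x : ℝ | (Q.comp (fpoly n)).eval x = 0} by
        ext x
        simp only [Set.mem_setOf_eq]
        rw [hsum x]]
      exact zset_eq _ hcompne
    rw [hZg, Set.ncard_coe_finset]
    have h1 : 1 + ((derivative (fpoly n)).roots.toFinset).card ≤ 2*n := by omega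
    calc (1 + ((derivative (fpoly n)).roots.toFinset).card) * (k-1)
        ≤ (2*n)*(k-1) := Nat.mul_le_mul_right _ h1
      _ = (k-1)*(2*n) := Nat.mul_comm _ _
      _ ≤ _ := hg_ncard
end

section
/- Let f_1, …, f_k be real analytic functions on a real interval I. Then the family (f_1, …, f_k) is linearly dependent over ℝ if and only if the Wronskian W(f_1, …, f_k) is identically zero on I. -/
open Set Filter Finset


lemma iterDW_of_mem_nhds {f : ℝ → ℝ} {s : Set ℝ} {x : ℝ} (h : s ∈ nhds x) (n : ℕ) :
    iteratedDerivWithin n f s x = iteratedDeriv n f x := by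
  simp only [iteratedDerivWithin, iteratedDeriv]
  rw [show s = Set.univ ∩ s from (Set.univ_inter s).symm, iteratedFDerivWithin_inter h,
    iteratedFDerivWithin_univ]

lemma iterD_const (n : ℕ) (c : ℝ) :
    iteratedDeriv n (fun _ : ℝ => c) = fun _ => if n = 0 then c else 0 := by
  induction n with
  | zero => simp [iteratedDeriv_zero]
  | succ n IH =>
    rw [iteratedDeriv_succ, IH]
    cases n <;> simp [deriv_const']

lemma AnalyticOnNhd.iteratedDeriv' {f : ℝ → ℝ} {s : Set ℝ} (h : AnalyticOnNhd ℝ f s) (n : ℕ) :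
    AnalyticOnNhd ℝ (iteratedDeriv n f) s := by
  rw [iteratedDeriv_eq_iterate]; exact h.iterated_deriv n

lemma binom_shuffle (n : ℕ) (P Q : ℕ → ℝ) :
    ∑ i ∈ range (n+1), (n.choose i : ℝ) * (P (n-i+1) * Q i + P (n-i) * Q (i+1)) =
    ∑ i ∈ range (n+2), ((n+1).choose i : ℝ) * P (n+1-i) * Q i := by
  have e1 : ∑ i ∈ range (n+1), (n.choose i : ℝ) * (P (n-i+1) * Q i + P (n-i) * Q (i+1))
      = (∑ i ∈ range (n+1), (n.choose i : ℝ) * P (n+1-i) * Q i)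
        + ∑ i ∈ range (n+1), (n.choose i : ℝ) * P (n-i) * Q (i+1) := by
    rw [← Finset.sum_add_distrib]
    refine Finset.sum_congr rfl fun i hi => ?_
    have hi' : i ≤ n := Nat.lt_succ_iff.mp (Finset.mem_range.mp hi)
    rw [Nat.succ_sub hi']
    ring
  rw [e1]
  rw [Finset.sum_range_succ' (fun i => ((n+1).choose i : ℝ) * P (n+1-i) * Q i) (n+1)]
  rw [Finset.sum_range_succ' (fun i => (n.choose i : ℝ) * P (n+1-i) * Q i) n]
  have e2 : ∑ i ∈ range n, ((n.choose (i+1) : ℝ)) * P (n+1-(i+1)) * Q (i+1)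
      = ∑ i ∈ range (n+1), ((n.choose (i+1) : ℝ)) * P (n+1-(i+1)) * Q (i+1) := by
    rw [Finset.sum_range_succ, Nat.choose_succ_self]
    simp
  rw [e2]
  simp only [Nat.succ_sub_succ, Nat.choose_zero_right, Nat.cast_one, one_mul, Nat.sub_zero]
  rw [add_right_comm, ← Finset.sum_add_distrib]
  congr 1
  refine Finset.sum_congr rfl fun i hi => ?_
  have : ((n+1).choose (i+1) : ℝ) = (n.choose i : ℝ) + (n.choose (i+1) : ℝ) := by
    rw [Nat.choose_succ_succ]; push_cast; ring
  rw [this]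
  ring

lemma leibniz_analytic {s : Set ℝ} (hs : IsOpen s) {p q : ℝ → ℝ}
    (hp : AnalyticOnNhd ℝ p s) (hq : AnalyticOnNhd ℝ q s) :
    ∀ (n : ℕ), ∀ x ∈ s, iteratedDeriv n (fun y => p y * q y) x =
      ∑ i ∈ range (n+1), (n.choose i : ℝ) * iteratedDeriv (n-i) p x * iteratedDeriv i q x := by
  intro n
  induction n with
  | zero => intro x hx; simp
  | succ n IH =>
    intro x hx
    have hdp : ∀ (m : ℕ) (y : ℝ), y ∈ s → DifferentiableAt ℝ (iteratedDeriv m p) y :=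
      fun m y hy => ((hp.iteratedDeriv' m) y hy).differentiableAt
    have hdq : ∀ (m : ℕ) (y : ℝ), y ∈ s → DifferentiableAt ℝ (iteratedDeriv m q) y :=
      fun m y hy => ((hq.iteratedDeriv' m) y hy).differentiableAt
    have e1 : iteratedDeriv n (fun y => p y * q y) =ᶠ[nhds x]
        fun y => ∑ i ∈ range (n+1), (n.choose i : ℝ) * iteratedDeriv (n-i) p y * iteratedDeriv i q y := by
      filter_upwards [hs.mem_nhds hx] with y hy using IH y hy
    rw [iteratedDeriv_succ, e1.deriv_eq]
    rw [deriv_fun_sum (A := fun i y => (n.choose i : ℝ) * iteratedDeriv (n-i) p y * iteratedDeriv i q y) (fun i _ => (((hdp (n-i) x hx).const_mul _).mul (hdq i x hx)))]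
    have hterm : ∀ i ∈ range (n+1),
        deriv (fun y => (n.choose i : ℝ) * iteratedDeriv (n-i) p y * iteratedDeriv i q y) x =
        (n.choose i : ℝ) * (iteratedDeriv (n-i+1) p x * iteratedDeriv i q x
          + iteratedDeriv (n-i) p x * iteratedDeriv (i+1) q x) := by
      intro i _
      rw [deriv_fun_mul ((hdp (n-i) x hx).const_mul _) (hdq i x hx),
        deriv_const_mul _ (hdp (n-i) x hx), ← iteratedDeriv_succ, ← iteratedDeriv_succ]
      ring
    rw [Finset.sum_congr rfl hterm]
    exact binom_shuffle n (fun m => iteratedDeriv m p x) (fun m => iteratedDeriv m q x)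

lemma core : ∀ (k : ℕ) (U : Set ℝ), IsOpen U → IsPreconnected U → U.Nonempty →
    ∀ f : ℕ → ℝ → ℝ, (∀ i < k, AnalyticOnNhd ℝ (f i) U) →
    (∀ x ∈ U, (Matrix.of fun r c : Fin k => iteratedDeriv (r : ℕ) (f (c : ℕ)) x).det = 0) →
    ∃ a : ℕ → ℝ, (∃ i < k, a i ≠ 0) ∧ ∀ x ∈ U, ∑ i ∈ Finset.range k, a i * f i x = 0 := by
  intro k
  induction k with
  | zero =>
    rintro U _ _ ⟨x, hx⟩ f _ hW
    exact absurd (hW x hx) (by simp [Matrix.det_fin_zero])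
  | succ k IH =>
    intro U hUo hUc hUne f hfa hW
    by_cases h0 : ∀ x ∈ U, f 0 x = 0
    · refine ⟨fun i => if i = 0 then 1 else 0, ⟨0, Nat.succ_pos k, by simp⟩, fun x hx => ?_⟩
      rw [Finset.sum_eq_single 0 (fun i _ hi => by simp [hi]) (by simp)]
      simp [h0 x hx]
    · push_neg at h0
      obtain ⟨x0, hx0U, hx0⟩ := h0
      -- find a ball around x0 inside U where f 0 is nonvanishing
      have hWopen : IsOpen (U ∩ (f 0) ⁻¹' {0}ᶜ) :=
        ((hfa 0 (Nat.succ_pos k)).continuousOn).isOpen_inter_preimage hUo isOpen_compl_singleton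
      obtain ⟨ε, hε, hball⟩ := Metric.isOpen_iff.mp hWopen x0 ⟨hx0U, hx0⟩
      set V : Set ℝ := Metric.ball x0 ε with hV
      have hVo : IsOpen V := Metric.isOpen_ball
      have hVU : V ⊆ U := fun y hy => (hball hy).1
      have hVne : ∀ y ∈ V, f 0 y ≠ 0 := fun y hy => (hball hy).2
      have hx0V : x0 ∈ V := Metric.mem_ball_self hε
      -- quotients
      set gg : ℕ → ℝ → ℝ := fun c y => f c y / f 0 y with hgg_def
      have hfaV : ∀ i < k + 1, AnalyticOnNhd ℝ (f i) V := fun i hi => (hfa i hi).mono hVU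
      have hggA : ∀ c < k + 1, AnalyticOnNhd ℝ (gg c) V :=
        fun c hc => (hfaV c hc).div (hfaV 0 (Nat.succ_pos k)) hVne
      set F : ℕ → ℝ → ℝ := fun c => deriv (gg (c+1)) with hF_def
      have hFA : ∀ c < k, AnalyticOnNhd ℝ (F c) V :=
        fun c hc => (hggA (c+1) (by omega)).deriv
      -- Wronskian of F vanishes on V
      have hWF : ∀ x ∈ V, (Matrix.of fun r c : Fin k => iteratedDeriv (r : ℕ) (F (c : ℕ)) x).det = 0 := by
        intro x hxV
        set L : Matrix (Fin (k+1)) (Fin (k+1)) ℝ :=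
          Matrix.of fun r s : Fin (k+1) =>
            ((r : ℕ).choose (s : ℕ) : ℝ) * iteratedDeriv ((r : ℕ) - (s : ℕ)) (f 0) x with hL
        set G : Matrix (Fin (k+1)) (Fin (k+1)) ℝ :=
          Matrix.of fun s c : Fin (k+1) => iteratedDeriv (s : ℕ) (gg (c : ℕ)) x with hG
        have hMLG : (Matrix.of fun r c : Fin (k+1) => iteratedDeriv (r : ℕ) (f (c : ℕ)) x) = L * G := by
          ext r c
          have hev : f (c : ℕ) =ᶠ[nhds x] fun y => f 0 y * gg (c : ℕ) y := by
            filter_upwards [hVo.mem_nhds hxV] with y hy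
            rw [hgg_def]
            field_simp
            rw [mul_div_cancel_right₀ _ (hVne y hy)]
          rw [Matrix.mul_apply]
          simp only [hL, hG, Matrix.of_apply]
          rw [hev.iteratedDeriv_eq (r : ℕ),
            leibniz_analytic hVo (hfaV 0 (Nat.succ_pos k)) (hggA (c : ℕ) c.isLt) (r : ℕ) x hxV]
          rw [Fin.sum_univ_eq_sum_range
            (fun i => ((r : ℕ).choose i : ℝ) * iteratedDeriv ((r : ℕ) - i) (f 0) x
              * iteratedDeriv i (gg (c : ℕ)) x) (k+1)]
          apply Finset.sum_subset (Finset.range_subset_range.mpr (by omega : (r : ℕ) + 1 ≤ k + 1))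
          intro i _ hi
          have : (r : ℕ) < i := by simpa using hi
          simp [Nat.choose_eq_zero_of_lt this]
        have hdetL : L.det = f 0 x ^ (k + 1) := by
          rw [Matrix.det_of_lowerTriangular L (fun i j hij => by
            have : (i : ℕ) < (j : ℕ) := hij
            simp [hL, Nat.choose_eq_zero_of_lt this])]
          simp [hL, Nat.choose_self, Nat.sub_self]
        have hdetM := hW x (hVU hxV)
        rw [hMLG, Matrix.det_mul, hdetL] at hdetM
        have hdetG : G.det = 0 := by
          rcases mul_eq_zero.mp hdetM with h | h
          · exact absurd h (pow_ne_zero _ (hVne x hxV))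
          · exact h
        -- expand along the first column of G
        have hG0 : ∀ r : Fin (k+1), G r 0 = if r = 0 then 1 else 0 := by
          intro r
          have hev : gg 0 =ᶠ[nhds x] fun _ => (1:ℝ) := by
            filter_upwards [hVo.mem_nhds hxV] with y hy
            simp [hgg_def, div_self (hVne y hy)]
          simp only [hG, Matrix.of_apply, Fin.val_zero]
          rw [hev.iteratedDeriv_eq (r : ℕ), iterD_const]
          rcases Fin.eq_zero_or_eq_succ r with h | ⟨j, rfl⟩
          · simp [h]
          · simp [Fin.succ_ne_zero]
        have hsub : G.submatrix Fin.succ Fin.succ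
            = Matrix.of fun r c : Fin k => iteratedDeriv (r : ℕ) (F (c : ℕ)) x := by
          ext r c
          simp only [Matrix.submatrix_apply, hG, Matrix.of_apply, Fin.val_succ]
          rw [iteratedDeriv_succ']
        rw [Matrix.det_succ_column_zero] at hdetG
        rw [Finset.sum_eq_single 0 (fun i _ hi => by simp [hG0 i, hi]) (by simp)] at hdetG
        rw [hG0 0] at hdetG
        simpa [Fin.succAbove_zero, hsub] using hdetG
      -- apply the induction hypothesis on V
      obtain ⟨c, ⟨i0, hi0k, hi0⟩, hcrel⟩ :=
        IH V hVo ((convex_ball x0 ε).isPreconnected) ⟨x0, hx0V⟩ F hFA hWF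
      -- the function h = ∑ c i * gg (i+1) is constant on V
      set h : ℝ → ℝ := fun y => ∑ i ∈ Finset.range k, c i * gg (i+1) y with hh_def
      have hhA : AnalyticOnNhd ℝ h V :=
        Finset.analyticOnNhd_fun_sum _ (fun i hi =>
          analyticOnNhd_const.mul (hggA (i+1) (by simp at hi; omega)))
      have hderiv : ∀ z ∈ V, deriv h z = 0 := by
        intro z hz
        have hdz : ∀ i ∈ Finset.range k, DifferentiableAt ℝ (fun y => c i * gg (i+1) y) z := by
          intro i hi
          have hi' : i + 1 < k + 1 := by simpa using Finset.mem_range.mp hi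
          exact (((hggA (i+1) hi') z hz).differentiableAt).const_mul _
        rw [hh_def, deriv_fun_sum hdz, ← hcrel z hz]
        refine Finset.sum_congr rfl fun i hi => ?_
        have hi' : i + 1 < k + 1 := by simpa using Finset.mem_range.mp hi
        rw [deriv_const_mul _ ((hggA (i+1) hi') z hz).differentiableAt]
      have hconst : ∀ z ∈ V, h z = h x0 := by
        intro z hz
        refine (convex_ball x0 ε).is_const_of_fderivWithin_eq_zero
          (hhA.differentiableOn) (fun y hy => ?_) hz hx0V
        rw [fderivWithin_of_isOpen hVo hy]
        have hd : DifferentiableAt ℝ h y := (hhA y hy).differentiableAt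
        have := hd.hasDerivAt.hasFDerivAt.fderiv
        rw [this, hderiv y hy]
        exact ContinuousLinearMap.ext fun w => by simp
      set C : ℝ := h x0 with hC
      have hrelV : ∀ x ∈ V, ∑ j ∈ Finset.range (k+1),
          (if j = 0 then -C else c (j-1)) * f j x = 0 := by
        intro x hxV
        rw [Finset.sum_range_succ']
        simp only [Nat.succ_ne_zero, if_false, if_true, Nat.add_sub_cancel]
        have : ∑ i ∈ Finset.range k, c i * f (i+1) x = C * f 0 x := by
          have e : ∀ i, c i * f (i+1) x = (c i * gg (i+1) x) * f 0 x := by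
            intro i
            rw [hgg_def]
            field_simp
            rw [mul_div_cancel_right₀ _ (hVne x hxV)]
          rw [Finset.sum_congr rfl (fun i _ => e i), ← Finset.sum_mul]
          have h2 : (∑ i ∈ Finset.range k, c i * gg (i+1) x) = C := hconst x hxV
          rw [h2]
        rw [this]
        ring
      -- extend from V to U by the identity theorem
      have hφA : AnalyticOnNhd ℝ (fun x => ∑ j ∈ Finset.range (k+1),
          (if j = 0 then -C else c (j-1)) * f j x) U :=
        Finset.analyticOnNhd_fun_sum _ (fun j hj =>
          analyticOnNhd_const.mul (hfa j (by simpa using hj)))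
      have hev0 : (fun x => ∑ j ∈ Finset.range (k+1),
          (if j = 0 then -C else c (j-1)) * f j x) =ᶠ[nhds x0] 0 := by
        filter_upwards [hVo.mem_nhds hx0V] with y hy using hrelV y hy
      refine ⟨fun j => if j = 0 then -C else c (j-1), ⟨i0 + 1, by omega, by simpa using hi0⟩,
        fun x hx => ?_⟩
      simpa using hφA.eqOn_zero_of_preconnected_of_eventuallyEq_zero hUc hx0U hev0 hx

lemma contDiffOn_partial_sum {s : Set ℝ} (n : ℕ) (a : ℕ → ℝ) (f : ℕ → ℝ → ℝ) (k : ℕ)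
    (hf : ∀ i < k, ContDiffOn ℝ n (f i) s) :
    ContDiffOn ℝ n (fun y => ∑ i ∈ range k, a i * f i y) s := by
  induction k with
  | zero => simpa using contDiffOn_const
  | succ m IHm =>
    have e : (fun y => ∑ i ∈ range (m+1), a i * f i y)
        = fun y => (∑ i ∈ range m, a i * f i y) + a m * f m y := by
      funext y; rw [Finset.sum_range_succ]
    rw [e]
    exact (IHm fun i hi => hf i (by omega)).add (contDiffOn_const.mul (hf m (by omega)))

lemma iterDW_sum {s : Set ℝ} (hs : UniqueDiffOn ℝ s) {x : ℝ} (hx : x ∈ s) (n : ℕ)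
    (a : ℕ → ℝ) (f : ℕ → ℝ → ℝ) (k : ℕ) (hf : ∀ i < k, ContDiffOn ℝ n (f i) s) :
    iteratedDerivWithin n (fun y => ∑ i ∈ range k, a i * f i y) s x
      = ∑ i ∈ range k, a i * iteratedDerivWithin n (f i) s x := by
  induction k with
  | zero =>
    simp only [range_zero, Finset.sum_empty]
    show iteratedDerivWithin n (fun _ : ℝ => (0:ℝ)) s x = 0
    simp [iteratedDerivWithin, iteratedFDerivWithin_zero_fun]
  | succ m IHm =>
    have e : (fun y => ∑ i ∈ range (m+1), a i * f i y)
        = (fun y => ∑ i ∈ range m, a i * f i y) + (fun y => a m * f m y) := by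
      funext y; rw [Finset.sum_range_succ]; rfl
    rw [e, iteratedDerivWithin_add hx hs
        (contDiffOn_partial_sum n a f m (fun i hi => hf i (by omega)) x hx)
        (contDiffOn_const.mul (hf m (by omega)) x hx),
      iteratedDerivWithin_const_mul hx hs _ (hf m (by omega) x hx),
      IHm (fun i hi => hf i (by omega)), Finset.sum_range_succ]


/-- The Wronskian of the first `j` functions of the family `f`, with derivatives
taken within the set `I`. -/
noncomputable def wronskianOn (I : Set ℝ) (f : ℕ → ℝ → ℝ) (j : ℕ) (x : ℝ) : ℝ :=
  (Matrix.of fun r c : Fin j => iteratedDerivWithin (r : ℕ) (f (c : ℕ)) I x).det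

/-- Bôcher's criterion: a family of analytic functions on an interval `I` is linearly
dependent (as functions on `I`) if and only if its Wronskian vanishes identically on `I`. -/
theorem stmt18 (k : ℕ) (hk : 1 ≤ k) (I : Set ℝ) (hI : I.OrdConnected) (hI' : I.Nontrivial)
    (f : ℕ → ℝ → ℝ) (hf : ∀ i < k, AnalyticOn ℝ (f i) I) :
    (∃ a : ℕ → ℝ, (∃ i < k, a i ≠ 0) ∧
        ∀ x ∈ I, (∑ i ∈ Finset.range k, a i * f i x) = 0) ↔
      ∀ x ∈ I, wronskianOn I f k x = 0 := by
  classical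
  have hconv : Convex ℝ I := hI.convex
  obtain ⟨p, hpI, q, hqI, hpq⟩ := hI'
  set U : Set ℝ := interior I with hUdef
  have hUo : IsOpen U := isOpen_interior
  have hIoo : ∀ {a b : ℝ}, a ∈ I → b ∈ I → Set.Ioo a b ⊆ U := by
    intro a b ha hb
    have h1 : Set.Ioo a b ⊆ I := fun z hz => hI.out ha hb ⟨le_of_lt hz.1, le_of_lt hz.2⟩
    exact (isOpen_Ioo.subset_interior_iff).mpr h1
  have hUne : U.Nonempty := by
    rcases lt_or_gt_of_ne hpq with h | h
    · exact ⟨(p+q)/2, hIoo hpI hqI ⟨by linarith, by linarith⟩⟩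
    · exact ⟨(q+p)/2, hIoo hqI hpI ⟨by linarith, by linarith⟩⟩
  have hUniq : UniqueDiffOn ℝ I := uniqueDiffOn_convex hconv hUne
  have hUc : IsPreconnected U := (hconv.interior).isPreconnected
  have hUI : U ⊆ I := interior_subset
  have hIcl : I ⊆ closure U := by
    intro x hx
    obtain ⟨y, hyI, hyx⟩ := (Set.nontrivial_of_mem_mem_ne hpI hqI hpq).exists_ne x
    rcases lt_or_gt_of_ne hyx with h | h
    · have hxc : x ∈ closure (Set.Ioo y x) := by
        rw [closure_Ioo (ne_of_lt h)]; exact ⟨le_of_lt h, le_refl x⟩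
      exact closure_mono (hIoo hyI hx) hxc
    · have hxc : x ∈ closure (Set.Ioo x y) := by
        rw [closure_Ioo (ne_of_gt h).symm]; exact ⟨le_refl x, le_of_lt h⟩
      exact closure_mono (hIoo hx hyI) hxc
  have hAN : ∀ i < k, AnalyticOnNhd ℝ (f i) U := fun i hi =>
    (hUo.analyticOn_iff_analyticOnNhd).mp ((hf i hi).mono hUI)
  have hID : ∀ (g : ℝ → ℝ) (n : ℕ), ∀ x ∈ U, iteratedDerivWithin n g I x = iteratedDeriv n g x :=
    fun g n x hx => iterDW_of_mem_nhds (mem_interior_iff_mem_nhds.mp hx) n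
  constructor
  · rintro ⟨a, ⟨i0, hi0k, hi0⟩, hrel⟩ x hx
    show (Matrix.of fun r c : Fin k => iteratedDerivWithin (r : ℕ) (f (c : ℕ)) I x).det = 0
    rw [← Matrix.exists_mulVec_eq_zero_iff]
    refine ⟨fun c => a (c : ℕ), ?_, ?_⟩
    · intro hv0
      apply hi0
      simpa using congrFun hv0 ⟨i0, hi0k⟩
    · funext r
      simp only [Matrix.mulVec, dotProduct, Matrix.of_apply, Pi.zero_apply]
      rw [Fin.sum_univ_eq_sum_range
        (fun c => iteratedDerivWithin (r : ℕ) (f c) I x * a c) k]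
      have hcd : ∀ i < k, ContDiffOn ℝ (r : ℕ) (f i) I := fun i hi => (hf i hi).contDiffOn hUniq
      rw [Finset.sum_congr rfl (fun i _ => mul_comm (iteratedDerivWithin (r : ℕ) (f i) I x) (a i)),
        ← iterDW_sum hUniq hx (r : ℕ) a f k hcd]
      have hEq : Set.EqOn (fun y => ∑ i ∈ range k, a i * f i y) (fun _ => (0:ℝ)) I :=
        fun y hy => hrel y hy
      rw [iteratedDerivWithin_congr hEq hx]
      show iteratedDerivWithin (r : ℕ) (fun _ : ℝ => (0:ℝ)) I x = 0
      simp [iteratedDerivWithin, iteratedFDerivWithin_zero_fun]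
  · intro hW
    have hWU : ∀ x ∈ U, (Matrix.of fun r c : Fin k => iteratedDeriv (r : ℕ) (f (c : ℕ)) x).det = 0 := by
      intro x hx
      have e : (Matrix.of fun r c : Fin k => iteratedDeriv (r : ℕ) (f (c : ℕ)) x)
          = Matrix.of fun r c : Fin k => iteratedDerivWithin (r : ℕ) (f (c : ℕ)) I x := by
        ext r c
        simp only [Matrix.of_apply]
        exact (hID (f (c : ℕ)) (r : ℕ) x hx).symm
      rw [e]
      exact hW x (hUI hx)
    obtain ⟨a, hane, hrelU⟩ := core k U hUo hUc hUne f hAN hWU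
    refine ⟨a, hane, fun x hx => ?_⟩
    have hφc : ContinuousOn (fun y => ∑ i ∈ range k, a i * f i y) I :=
      (contDiffOn_partial_sum 0 a f k (fun i hi => (hf i hi).contDiffOn hUniq)).continuousOn
    have hne : (nhdsWithin x U).NeBot := mem_closure_iff_nhdsWithin_neBot.mp (hIcl hx)
    have t1 : Filter.Tendsto (fun y => ∑ i ∈ range k, a i * f i y) (nhdsWithin x U)
        (nhds (∑ i ∈ range k, a i * f i x)) := (hφc x hx).mono hUI
    have t2 : Filter.Tendsto (fun y => ∑ i ∈ range k, a i * f i y) (nhdsWithin x U) (nhds 0) := by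
      refine Filter.Tendsto.congr' ?_ tendsto_const_nhds
      filter_upwards [self_mem_nhdsWithin] with y hy
      exact (hrelU y hy).symm
    exact tendsto_nhds_unique t1 t2
end

section
/- Let f_1, …, f_k be real functions that are (k−1)-times differentiable on a real interval I and do not vanish on I. Then for all x ∈ I, W(f_1, …, f_k)(x) = f_1(x)^k · W((f_2/f_1)′, …, (f_k/f_1)′)(x), where the Wronskian on the right-hand side is the Wronskian of the k−1 functions (f_2/f_1)′, …, (f_k/f_1)′. -/
open Finset

private lemma iterDW_one {s : Set ℝ} {x : ℝ} (hs : UniqueDiffOn ℝ s) (hx : x ∈ s) (n : ℕ) :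
    iteratedDerivWithin n (fun _ : ℝ => (1:ℝ)) s x = if n = 0 then 1 else 0 := by
  rcases Nat.eq_zero_or_pos n with h | h
  · subst h; simp
  · rw [if_neg h.ne', iteratedDerivWithin_eq_iteratedFDerivWithin,
      iteratedFDerivWithin_const_of_ne h.ne' (1:ℝ) s]
    simp

private lemma hasDW {s : Set ℝ} {x : ℝ} (hs : UniqueDiffOn ℝ s) (hx : x ∈ s)
    {f : ℝ → ℝ} {n m : ℕ} (hf : ContDiffOn ℝ n f s) (hm : m < n) :
    HasDerivWithinAt (iteratedDerivWithin m f s)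
      (iteratedDerivWithin (m + 1) f s x) s x := by
  have hd := (hf.differentiableOn_iteratedDerivWithin (by exact_mod_cast hm) hs) x hx
  rw [iteratedDerivWithin_succ]
  exact hd.hasDerivWithinAt

private lemma leibniz {s : Set ℝ} (hs : UniqueDiffOn ℝ s) {f g : ℝ → ℝ} :
    ∀ (n : ℕ), ContDiffOn ℝ n f s → ContDiffOn ℝ n g s → ∀ x ∈ s,
      iteratedDerivWithin n (fun y => f y * g y) s x =
        ∑ i ∈ range (n + 1),
          (n.choose i : ℝ) * iteratedDerivWithin (n - i) f s x
            * iteratedDerivWithin i g s x := by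
  intro n
  induction n with
  | zero => intro _ _ x hx; simp
  | succ n IH =>
    intro hf hg x hx
    have hle : ((n : ℕ∞) : WithTop ℕ∞) ≤ ((n + 1 : ℕ) : ℕ∞) := by exact_mod_cast Nat.le_succ n
    have hf' : ContDiffOn ℝ n f s := hf.of_le (by exact_mod_cast Nat.le_succ n)
    have hg' : ContDiffOn ℝ n g s := hg.of_le (by exact_mod_cast Nat.le_succ n)
    have step1 : iteratedDerivWithin (n+1) (fun y => f y * g y) s x
        = derivWithin (fun y => ∑ i ∈ range (n + 1),
            (n.choose i : ℝ) * iteratedDerivWithin (n - i) f s y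
              * iteratedDerivWithin i g s y) s x := by
      rw [iteratedDerivWithin_succ]
      exact derivWithin_congr (fun y hy => IH hf' hg' y hy) (IH hf' hg' x hx)
    have step2 : HasDerivWithinAt (fun y => ∑ i ∈ range (n + 1),
            (n.choose i : ℝ) * iteratedDerivWithin (n - i) f s y
              * iteratedDerivWithin i g s y)
        (∑ i ∈ range (n + 1), (n.choose i : ℝ) *
            (iteratedDerivWithin (n - i + 1) f s x * iteratedDerivWithin i g s x
              + iteratedDerivWithin (n - i) f s x * iteratedDerivWithin (i + 1) g s x))
        s x := by
      apply HasDerivWithinAt.fun_sum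
      intro i hi
      have hi' : i ≤ n := Nat.lt_succ_iff.mp (mem_range.mp hi)
      have h1 : HasDerivWithinAt (iteratedDerivWithin (n - i) f s)
          (iteratedDerivWithin (n - i + 1) f s x) s x := hasDW hs hx hf (by omega)
      have h2 : HasDerivWithinAt (iteratedDerivWithin i g s)
          (iteratedDerivWithin (i + 1) g s x) s x := hasDW hs hx hg (by omega)
      simpa [mul_assoc] using (h1.mul h2).const_mul ((n.choose i : ℝ))
    rw [step1, step2.derivWithin (hs.uniqueDiffWithinAt hx)]
    set A : ℕ → ℝ := fun i => iteratedDerivWithin i f s x with hA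
    set B : ℕ → ℝ := fun i => iteratedDerivWithin i g s x with hB
    show ∑ i ∈ range (n + 1), (n.choose i : ℝ) * (A (n - i + 1) * B i + A (n - i) * B (i + 1))
        = ∑ i ∈ range (n + 2), ((n + 1).choose i : ℝ) * A (n + 1 - i) * B i
    have e1 : ∀ i ∈ range (n + 1), (n.choose i : ℝ) *
          (A (n - i + 1) * B i + A (n - i) * B (i + 1))
        = (n.choose i : ℝ) * A (n + 1 - i) * B i
          + (n.choose i : ℝ) * A (n - i) * B (i + 1) := by
      intro i hi
      have h2 : n - i + 1 = n + 1 - i := by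
        have := Nat.lt_succ_iff.mp (mem_range.mp hi); omega
      rw [h2]; ring
    rw [Finset.sum_congr rfl e1, Finset.sum_add_distrib]
    have eS1 : ∑ i ∈ range (n + 1), (n.choose i : ℝ) * A (n + 1 - i) * B i
        = (∑ i ∈ range (n + 1), (n.choose (i + 1) : ℝ) * A (n - i) * B (i + 1))
          + A (n + 1) * B 0 := by
      rw [Finset.sum_range_succ' (fun i => (n.choose i : ℝ) * A (n + 1 - i) * B i) n]
      rw [Finset.sum_range_succ (fun i => (n.choose (i + 1) : ℝ) * A (n - i) * B (i + 1)) n]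
      simp [Nat.succ_sub_succ]
    have eRHS : ∑ i ∈ range (n + 2), ((n + 1).choose i : ℝ) * A (n + 1 - i) * B i
        = (∑ i ∈ range (n + 1),
            ((n.choose i : ℝ) * A (n - i) * B (i + 1)
              + (n.choose (i + 1) : ℝ) * A (n - i) * B (i + 1)))
          + A (n + 1) * B 0 := by
      rw [Finset.sum_range_succ' (fun i => ((n + 1).choose i : ℝ) * A (n + 1 - i) * B i) (n + 1)]
      congr 1
      · refine Finset.sum_congr rfl fun i hi => ?_
        rw [Nat.choose_succ_succ, Nat.succ_sub_succ]
        push_cast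
        ring
      · simp
    rw [eS1, eRHS, Finset.sum_add_distrib]
    ring

/-- If `f 0, …, f (k-1)` are `(k-1)`-times differentiable on an interval `I` and do not
vanish on `I`, then on `I` one has
`W(f_1, …, f_k) = f_1^k · W((f_2/f_1)′, …, (f_k/f_1)′)`. -/
theorem stmt19 (k : ℕ) (hk : 1 ≤ k) (I : Set ℝ) (hI : I.OrdConnected) (hI' : I.Nontrivial)
    (f : ℕ → ℝ → ℝ)
    (hdiff : ∀ i < k, ContDiffOn ℝ (k - 1 : ℕ) (f i) I)
    (hnv : ∀ i < k, ∀ x ∈ I, f i x ≠ 0) :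
    ∀ x ∈ I,
      wronskianOn I f k x =
        (f 0 x) ^ k *
          wronskianOn I (fun i => derivWithin (fun y => f (i + 1) y / f 0 y) I) (k - 1) x := by
  obtain ⟨j, rfl⟩ : ∃ j, k = j + 1 := ⟨k - 1, (Nat.succ_pred_eq_of_pos hk).symm⟩
  have hk1 : j + 1 - 1 = j := rfl
  rw [hk1] at hdiff ⊢
  -- `I` has unique differentiability
  have hs : UniqueDiffOn ℝ I := by
    apply uniqueDiffOn_convex hI.convex
    obtain ⟨a, ha, b, hb, hab⟩ := hI'
    rcases lt_or_gt_of_ne hab with h | h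
    · exact ⟨(a + b) / 2, interior_maximal (Set.Ioo_subset_Icc_self.trans (hI.out ha hb))
        isOpen_Ioo (by constructor <;> linarith)⟩
    · exact ⟨(a + b) / 2, interior_maximal (Set.Ioo_subset_Icc_self.trans (hI.out hb ha))
        isOpen_Ioo (by constructor <;> linarith)⟩
  intro x hx
  set g : ℕ → ℝ → ℝ := fun c y => f c y / f 0 y with hgdef
  have h0 : (0 : ℕ) < j + 1 := by omega
  have hg : ∀ c < j + 1, ContDiffOn ℝ (j : ℕ) (g c) I := fun c hc =>
    ContDiffOn.div (hdiff c hc) (hdiff 0 h0) (hnv 0 h0)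
  have heq : ∀ c < j + 1, Set.EqOn (f c) (fun y => f 0 y * g c y) I := by
    intro c hc y hy
    simp only [g]
    rw [mul_comm, div_mul_cancel₀ _ (hnv 0 h0 y hy)]
  set L : Matrix (Fin (j + 1)) (Fin (j + 1)) ℝ := Matrix.of fun r i =>
    (((r : ℕ)).choose (i : ℕ) : ℝ) * iteratedDerivWithin ((r : ℕ) - (i : ℕ)) (f 0) I x with hL
  set G : Matrix (Fin (j + 1)) (Fin (j + 1)) ℝ := Matrix.of fun i c =>
    iteratedDerivWithin (i : ℕ) (g (c : ℕ)) I x with hG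
  have hA : (Matrix.of fun r c : Fin (j + 1) =>
      iteratedDerivWithin (r : ℕ) (f (c : ℕ)) I x) = L * G := by
    ext r c
    have hr : (r : ℕ) ≤ j := Nat.lt_succ_iff.mp r.isLt
    have hrle : ((r : ℕ) : WithTop ℕ∞) ≤ ((j : ℕ) : WithTop ℕ∞) := by exact_mod_cast hr
    have step1 : iteratedDerivWithin (r : ℕ) (f (c : ℕ)) I x
        = iteratedDerivWithin (r : ℕ) (fun y => f 0 y * g (c : ℕ) y) I x :=
      iteratedDerivWithin_congr (heq (c : ℕ) c.isLt) hx
    have step2 := leibniz hs (r : ℕ) ((hdiff 0 h0).of_le hrle)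
      ((hg (c : ℕ) c.isLt).of_le hrle) x hx
    have step3 : ∑ i ∈ range ((r : ℕ) + 1),
          (((r : ℕ)).choose i : ℝ) * iteratedDerivWithin ((r : ℕ) - i) (f 0) I x
            * iteratedDerivWithin i (g (c : ℕ)) I x
        = ∑ i ∈ range (j + 1),
          (((r : ℕ)).choose i : ℝ) * iteratedDerivWithin ((r : ℕ) - i) (f 0) I x
            * iteratedDerivWithin i (g (c : ℕ)) I x := by
      apply Finset.sum_subset (Finset.range_subset_range.mpr (by omega))
      intro i _ hi
      have : (r : ℕ) < i := by
        have := Finset.mem_range.not.mp hi; omega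
      rw [Nat.choose_eq_zero_of_lt this]
      simp
    have step4 : ∑ i ∈ range (j + 1),
          (((r : ℕ)).choose i : ℝ) * iteratedDerivWithin ((r : ℕ) - i) (f 0) I x
            * iteratedDerivWithin i (g (c : ℕ)) I x
        = ∑ i : Fin (j + 1), L r i * G i c := by
      simp only [hL, hG, Matrix.of_apply]
      exact (Fin.sum_univ_eq_sum_range (fun i =>
        (((r : ℕ)).choose i : ℝ) * iteratedDerivWithin ((r : ℕ) - i) (f 0) I x
          * iteratedDerivWithin i (g (c : ℕ)) I x) (j + 1)).symm
    simp only [Matrix.mul_apply, Matrix.of_apply]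
    rw [step1, step2, step3, step4]
  have detL : L.det = (f 0 x) ^ (j + 1) := by
    have htri : L.BlockTriangular OrderDual.toDual := by
      intro r i hri
      have : (r : ℕ) < (i : ℕ) := hri
      simp [hL, Nat.choose_eq_zero_of_lt this]
    rw [Matrix.det_of_lowerTriangular L htri]
    have : ∀ i : Fin (j + 1), L i i = f 0 x := by
      intro i
      simp [hL, iteratedDerivWithin_zero]
    rw [Finset.prod_congr rfl fun i _ => this i]
    simp
  have hGcol : ∀ i : Fin (j + 1), G i 0 = if (i : ℕ) = 0 then 1 else 0 := by
    intro i
    have hone : Set.EqOn (g 0) (fun _ : ℝ => (1 : ℝ)) I := fun y hy =>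
      div_self (hnv 0 h0 y hy)
    have : G i 0 = iteratedDerivWithin (i : ℕ) (g 0) I x := rfl
    rw [this, iteratedDerivWithin_congr hone hx, iterDW_one hs hx]
  have detG : G.det =
      wronskianOn I (fun i => derivWithin (fun y => f (i + 1) y / f 0 y) I) j x := by
    rw [Matrix.det_succ_column_zero]
    rw [Finset.sum_eq_single 0]
    · rw [hGcol 0]
      simp only [Fin.val_zero, if_pos rfl, Fin.succAbove_zero]
      rw [wronskianOn]
      have hmat' : G.submatrix Fin.succ Fin.succ
          = Matrix.of fun r c : Fin j => iteratedDerivWithin (r : ℕ)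
              ((fun i => derivWithin (fun y => f (i + 1) y / f 0 y) I) (c : ℕ)) I x := by
        ext r c
        simp only [Matrix.submatrix_apply, Matrix.of_apply, hG]
        show iteratedDerivWithin ((r : ℕ) + 1) (g ((c : ℕ) + 1)) I x = _
        rw [iteratedDerivWithin_succ']
      rw [hmat']
      simp
    · intro i _ hi
      rw [hGcol i]
      have : (i : ℕ) ≠ 0 := fun h => hi (Fin.ext h)
      rw [if_neg this]
      ring
    · intro h
      exact absurd (Finset.mem_univ 0) h
  show wronskianOn I f (j + 1) x = _
  rw [wronskianOn, hA, Matrix.det_mul, detL, detG]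
end
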